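/- Let Q be a quiver and KQ^c its path coalgebra. For vertices x, y ∈ Q₀, the space of (x,y)-primitive elements P_{x,y}(KQ^c) equals y(KQ₁)x ⊕ K(x − y), where y(KQ₁)x is the K-span of all arrows from x to y. In particular, there is a non-trivial (x,y)-primitive element in KQ^c if and only if there is an arrow from x to y in Q. -/

import Mathlib

open TensorProduct

universe u v

/-- The type indexing the basis of the path coalgebra: all paths of the quiver. -/
abbrev PathsOf (V : Type u) [Quiver.{v + 1} V] : Type (max u (v + 1)) :=
  Σ a b : V, Quiver.Path a b

variable (K : Type*) [Field K] (V : Type u) [Quiver.{v + 1} V] [DecidableEq V]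

/-- The underlying vector space of the path coalgebra `KQ^c`: the free `K`-module on
the set of paths of `Q`. -/
abbrev PathCoalg := PathsOf V →₀ K

variable {V}

/-- The basis element of the path coalgebra given by a path. -/
noncomputable def pelt {a b : V} (p : Quiver.Path a b) : PathCoalg K V :=
  Finsupp.single ⟨a, b, p⟩ 1

/-- The group-like basis element of the path coalgebra given by a vertex. -/
noncomputable def vtx (a : V) : PathCoalg K V := pelt K (Quiver.Path.nil (a := a))

/-- The linear map on the path coalgebra sending a path `β : a' → b` to `f∘β : a' → c`
(and paths not ending at `b` to `0`), for an arrow `f : b ⟶ c`. -/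
noncomputable def consL {b c : V} (f : b ⟶ c) : PathCoalg K V →ₗ[K] PathCoalg K V :=
  Finsupp.lsum K fun p : PathsOf V =>
    if h : p.2.1 = b then
      LinearMap.toSpanSingleton K (PathCoalg K V) (pelt K ((p.2.2.cast rfl h).cons f))
    else 0

/-- The comultiplication of the path coalgebra on a path `p`:
`Δ(p) = ∑_{βα = p} β ⊗ α`, defined by recursion on `p`. -/
noncomputable def deltaPath {a : V} : ∀ {b : V}, Quiver.Path a b →
    TensorProduct K (PathCoalg K V) (PathCoalg K V)
  | _, Quiver.Path.nil => vtx K a ⊗ₜ[K] vtx K a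
  | c, Quiver.Path.cons p f =>
      TensorProduct.map (consL K f) LinearMap.id (deltaPath p) +
        vtx K c ⊗ₜ[K] pelt K (p.cons f)

/-- The comultiplication `Δ : KQ^c → KQ^c ⊗ KQ^c` of the path coalgebra,
`Δ(p) = ∑_{βα = p} β ⊗ α`. -/
noncomputable def pathComul :
    PathCoalg K V →ₗ[K] TensorProduct K (PathCoalg K V) (PathCoalg K V) :=
  Finsupp.lsum K fun p : PathsOf V =>
    LinearMap.toSpanSingleton K _ (deltaPath K p.2.2)

section Aux

variable {K}

/-- Length of the path of an element of `PathsOf V`. -/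
def plen (s : PathsOf V) : ℕ := s.2.2.length

variable (K)

/-- Coefficient extraction on the tensor square. -/
noncomputable def coeff2 (q r : PathsOf V) :
    TensorProduct K (PathCoalg K V) (PathCoalg K V) →ₗ[K] K :=
  (Finsupp.lapply (q, r)).comp
    (finsuppTensorFinsupp' K (PathsOf V) (PathsOf V)).toLinearMap

lemma coeff2_tmul (q r : PathsOf V) (f g : PathCoalg K V) :
    coeff2 K q r (f ⊗ₜ[K] g) = f q * g r := by
  simp [coeff2, finsuppTensorFinsupp'_apply_apply]

variable {K}

/-- Composition of composable elements of `PathsOf V` (the first argument comes first). -/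
def pcomp (r q : PathsOf V) : Option (PathsOf V) :=
  if h : r.2.1 = q.1 then some ⟨r.1, q.2.1, (r.2.2.cast rfl h).comp q.2.2⟩ else none

open Classical in
/-- Strip the last arrow `f` from a path-element, if possible. -/
noncomputable def unconsQ {b c : V} (f : b ⟶ c) (q : PathsOf V) : Option (PathsOf V) :=
  if h : ∃ β : Quiver.Path q.1 b, q = ⟨q.1, c, β.cons f⟩ then some ⟨q.1, b, h.choose⟩
  else none

lemma sig_inj {a b : V} {p p' : Quiver.Path a b} :
    (⟨a, b, p⟩ : PathsOf V) = ⟨a, b, p'⟩ ↔ p = p' := by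
  constructor
  · intro h
    rw [Sigma.ext_iff] at h
    have h2 := eq_of_heq h.2
    rw [Sigma.ext_iff] at h2
    exact eq_of_heq h2.2
  · rintro rfl; rfl

lemma sigma_cons_iff {b c : V} (f : b ⟶ c) {a₁ a₂ : V}
    (p₁ : Quiver.Path a₁ b) (p₂ : Quiver.Path a₂ b) :
    (⟨a₁, c, p₁.cons f⟩ : PathsOf V) = ⟨a₂, c, p₂.cons f⟩ ↔
      (⟨a₁, b, p₁⟩ : PathsOf V) = ⟨a₂, b, p₂⟩ := by
  constructor
  · intro h
    obtain rfl : a₁ = a₂ := congrArg Sigma.fst h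
    rw [sig_inj] at h ⊢
    exact eq_of_heq (Quiver.Path.heq_of_cons_eq_cons h)
  · intro h
    obtain rfl : a₁ = a₂ := congrArg Sigma.fst h
    rw [sig_inj] at h ⊢
    rw [h]

lemma unconsQ_eq_some_iff {b c : V} (f : b ⟶ c) (q : PathsOf V) {a' : V}
    (β : Quiver.Path a' b) :
    unconsQ f q = some ⟨a', b, β⟩ ↔ q = ⟨a', c, β.cons f⟩ := by
  constructor
  · intro h
    unfold unconsQ at h
    split at h
    · rename_i hex
      have hs := Option.some_inj.mp h
      rw [hex.choose_spec]
      exact (sigma_cons_iff f _ _).mpr hs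
    · exact absurd h (by simp)
  · intro h
    subst h
    have hex : ∃ γ : Quiver.Path a' b,
        (⟨a', c, β.cons f⟩ : PathsOf V) = ⟨a', c, γ.cons f⟩ := ⟨β, rfl⟩
    unfold unconsQ
    rw [dif_pos hex]
    exact congrArg some ((sigma_cons_iff f _ _).mp hex.choose_spec).symm

lemma unconsQ_snd {b c : V} (f : b ⟶ c) (q s : PathsOf V) (h : unconsQ f q = some s) :
    s.2.1 = b := by
  unfold unconsQ at h
  split at h
  · rw [← Option.some_inj.mp h]
  · simp at h

set_option linter.unusedSectionVars false

lemma length_cast'' {u v u' v' : V} (hu : u = u') (hv : v = v') (p : Quiver.Path u v) :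
    (p.cast hu hv).length = p.length := by
  subst hu; subst hv; rw [Quiver.Path.cast_rfl_rfl]

lemma eq_nil_of_plen_zero (s : PathsOf V) (h0 : s.2.2.length = 0) :
    s = ⟨s.1, s.1, Quiver.Path.nil⟩ := by
  obtain ⟨s1, s2, sp⟩ := s
  dsimp at h0 ⊢
  obtain rfl : s1 = s2 := Quiver.Path.eq_of_length_zero sp h0
  rw [Quiver.Path.eq_nil_of_length_zero sp h0]

lemma consL_apply {b c : V} (f : b ⟶ c) (x : PathCoalg K V) (q : PathsOf V) :
    consL K f x q = (unconsQ f q).elim 0 x := by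
  classical
  rw [consL, Finsupp.lsum_apply, Finsupp.sum_apply]
  have key : ∀ s k,
      ((if h : s.2.1 = b then
          LinearMap.toSpanSingleton K (PathCoalg K V)
            (pelt K ((s.2.2.cast rfl h).cons f))
        else 0) k) q = if unconsQ f q = some s then k else 0 := by
    intro s k
    split
    · rename_i h
      obtain ⟨s1, s2, sp⟩ := s
      obtain rfl : s2 = b := h
      have hcond : ((⟨s1, c, sp.cons f⟩ : PathsOf V) = q) ↔
          unconsQ f q = some ⟨s1, s2, sp⟩ := by
        rw [unconsQ_eq_some_iff]
        exact eq_comm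
      rw [LinearMap.toSpanSingleton_apply, pelt, Finsupp.smul_single', mul_one]
      simp only [Quiver.Path.cast_rfl_rfl]
      rw [Finsupp.single_apply, if_congr hcond rfl rfl]
    · rename_i h
      rw [if_neg (fun heq => h (unconsQ_snd f q s heq))]
      simp
  simp only [key]
  cases hopt : unconsQ f q with
  | none =>
      rw [Finsupp.sum]
      apply Finset.sum_eq_zero
      intro s _
      rw [if_neg (by simp)]
  | some s₀ =>
      simp only [Option.some_inj]
      rw [Finsupp.sum, Finset.sum_ite_eq]
      split
      · rfl
      · rename_i hmem
        exact (Finsupp.notMem_support_iff.mp hmem).symm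

lemma map_consL_coeff {b c : V} (f : b ⟶ c) (q r : PathsOf V)
    (t : TensorProduct K (PathCoalg K V) (PathCoalg K V)) :
    coeff2 K q r (TensorProduct.map (consL K f) LinearMap.id t) =
      (unconsQ f q).elim 0 (fun s => coeff2 K s r t) := by
  induction t using TensorProduct.induction_on with
  | zero => cases unconsQ f q <;> simp
  | tmul u v =>
      rw [TensorProduct.map_tmul, coeff2_tmul, LinearMap.id_apply, consL_apply]
      cases unconsQ f q with
      | none => simp
      | some s => simp [coeff2_tmul]
  | add u v hu hv =>
      rw [map_add, map_add, hu, hv]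
      cases unconsQ f q <;> simp

lemma pcomp_sigma {a m b : V} (α : Quiver.Path a m) (β : Quiver.Path m b) :
    pcomp ⟨a, m, α⟩ ⟨m, b, β⟩ = some ⟨a, b, α.comp β⟩ := by
  unfold pcomp
  rw [dif_pos rfl]
  rw [Quiver.Path.cast_rfl_rfl]

lemma pcomp_cases {r q s : PathsOf V} (h : pcomp r q = some s) :
    ∃ (h1 : r.2.1 = q.1), s = ⟨r.1, q.2.1, (r.2.2.cast rfl h1).comp q.2.2⟩ := by
  unfold pcomp at h
  split at h
  · exact ⟨‹_›, (Option.some_inj.mp h).symm⟩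
  · simp at h

lemma sig_eq_elim {a b a' b' : V} {p : Quiver.Path a b} {p' : Quiver.Path a' b'}
    (h : (⟨a, b, p⟩ : PathsOf V) = ⟨a', b', p'⟩) :
    a = a' ∧ b = b' ∧ HEq p p' := by
  obtain rfl : a = a' := congrArg Sigma.fst h
  obtain rfl : b = b' := congrArg (fun s : PathsOf V => s.2.1) h
  exact ⟨rfl, rfl, heq_of_eq (sig_inj.mp h)⟩

lemma pcomp_eq_some_iff {a b : V} (s : Quiver.Path a b) (q r : PathsOf V) :
    pcomp r q = some ⟨a, b, s⟩ ↔
      ∃ (m : V) (α : Quiver.Path a m) (β : Quiver.Path m b),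
        r = ⟨a, m, α⟩ ∧ q = ⟨m, b, β⟩ ∧ α.comp β = s := by
  constructor
  · intro h
    obtain ⟨q1, q2, qp⟩ := q
    obtain ⟨r1, r2, ρ⟩ := r
    unfold pcomp at h
    dsimp only at h
    split at h
    · rename_i h1
      subst h1
      rw [Quiver.Path.cast_rfl_rfl] at h
      have h2 := Option.some_inj.mp h
      obtain ⟨ha, hb, hcast⟩ := sig_eq_elim h2
      obtain rfl : r1 = a := ha
      obtain rfl : q2 = b := hb
      exact ⟨r2, ρ, qp, rfl, rfl, eq_of_heq hcast⟩
    · simp at h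
  · rintro ⟨m, α, β, rfl, rfl, rfl⟩
    exact pcomp_sigma α β

lemma pcomp_nil_iff {a : V} (q r : PathsOf V) :
    pcomp r q = some ⟨a, a, Quiver.Path.nil⟩ ↔
      q = ⟨a, a, Quiver.Path.nil⟩ ∧ r = ⟨a, a, Quiver.Path.nil⟩ := by
  rw [pcomp_eq_some_iff]
  constructor
  · rintro ⟨m, α, β, rfl, rfl, hcomp⟩
    have hlen := congrArg Quiver.Path.length hcomp
    rw [Quiver.Path.length_comp] at hlen
    simp only [Quiver.Path.length_nil] at hlen
    have hα : α.length = 0 := by omega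
    have hβ : β.length = 0 := by omega
    obtain rfl : a = m := Quiver.Path.eq_of_length_zero α hα
    rw [Quiver.Path.eq_nil_of_length_zero α hα, Quiver.Path.eq_nil_of_length_zero β hβ]
    exact ⟨rfl, rfl⟩
  · rintro ⟨rfl, rfl⟩
    exact ⟨a, Quiver.Path.nil, Quiver.Path.nil, rfl, rfl, rfl⟩

lemma pcomp_cons_iff {b c : V} (f : b ⟶ c) {a a' : V} (p : Quiver.Path a b)
    (β : Quiver.Path a' b) (r : PathsOf V) :
    pcomp r ⟨a', c, β.cons f⟩ = some ⟨a, c, p.cons f⟩ ↔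
      pcomp r ⟨a', b, β⟩ = some ⟨a, b, p⟩ := by
  rw [pcomp_eq_some_iff, pcomp_eq_some_iff]
  constructor
  · rintro ⟨m, α, β₀, rfl, hq, hcomp⟩
    obtain ⟨ha, -, hcast⟩ := sig_eq_elim hq
    obtain rfl : a' = m := ha
    obtain rfl := eq_of_heq hcast
    rw [Quiver.Path.comp_cons] at hcomp
    have := eq_of_heq (Quiver.Path.heq_of_cons_eq_cons hcomp)
    exact ⟨a', α, β, rfl, rfl, this⟩
  · rintro ⟨m, α, β₀, rfl, hq, hcomp⟩
    obtain ⟨ha, -, hcast⟩ := sig_eq_elim hq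
    obtain rfl : a' = m := ha
    obtain rfl := eq_of_heq hcast
    exact ⟨a', α, β.cons f, rfl, rfl, by rw [Quiver.Path.comp_cons, hcomp]⟩

lemma pcomp_cons_none {b c : V} (f : b ⟶ c) {a : V} (p : Quiver.Path a b) (q r : PathsOf V)
    (hq : ∀ (a' : V) (β : Quiver.Path a' b), q ≠ ⟨a', c, β.cons f⟩) :
    pcomp r q = some ⟨a, c, p.cons f⟩ ↔
      q = ⟨c, c, Quiver.Path.nil⟩ ∧ r = ⟨a, c, p.cons f⟩ := by
  rw [pcomp_eq_some_iff]
  constructor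
  · rintro ⟨m, α, β, rfl, rfl, hcomp⟩
    cases β with
    | nil =>
        rw [Quiver.Path.comp_nil] at hcomp
        subst hcomp
        exact ⟨rfl, rfl⟩
    | cons β' g =>
        rename_i m'
        rw [Quiver.Path.comp_cons] at hcomp
        obtain rfl : m' = b := Quiver.Path.obj_eq_of_cons_eq_cons hcomp
        obtain rfl : g = f := eq_of_heq (Quiver.Path.hom_heq_of_cons_eq_cons hcomp)
        exact absurd rfl (hq m β')
  · rintro ⟨rfl, rfl⟩
    exact ⟨c, p.cons f, Quiver.Path.nil, rfl, rfl, rfl⟩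

open Classical in
lemma vtx_apply (m : V) (s : PathsOf V) :
    vtx K m s = if (⟨m, m, Quiver.Path.nil⟩ : PathsOf V) = s then (1 : K) else 0 := by
  rw [vtx, pelt, Finsupp.single_apply]

open Classical in
lemma pelt_apply {a b : V} (p : Quiver.Path a b) (s : PathsOf V) :
    pelt K p s = if (⟨a, b, p⟩ : PathsOf V) = s then (1 : K) else 0 := by
  rw [pelt, Finsupp.single_apply]

open Classical in
lemma deltaPath_coeff {a b : V} (p : Quiver.Path a b) (q r : PathsOf V) :
    coeff2 K q r (deltaPath K p) = if pcomp r q = some ⟨a, b, p⟩ then (1 : K) else 0 := by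
  induction p generalizing q r with
  | nil =>
      rw [show deltaPath K (Quiver.Path.nil (a := a)) = vtx K a ⊗ₜ[K] vtx K a from rfl]
      rw [coeff2_tmul, vtx_apply, vtx_apply]
      by_cases h1 : (⟨a, a, Quiver.Path.nil⟩ : PathsOf V) = q
      · by_cases h2 : (⟨a, a, Quiver.Path.nil⟩ : PathsOf V) = r
        · subst h1; subst h2
          rw [if_pos rfl]
          rw [if_pos ((pcomp_nil_iff _ _).mpr ⟨rfl, rfl⟩)]
          norm_num
        · rw [if_neg h2, if_neg (fun h => h2 ((pcomp_nil_iff q r).mp h).2.symm)]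
          ring
      · rw [if_neg h1, if_neg (fun h => h1 ((pcomp_nil_iff q r).mp h).1.symm)]
        ring
  | @cons m b' p f ih =>
      rw [show deltaPath K (p.cons f) =
        TensorProduct.map (consL K f) LinearMap.id (deltaPath K p) +
          vtx K b' ⊗ₜ[K] pelt K (p.cons f) from rfl]
      rw [map_add, map_consL_coeff, coeff2_tmul]
      cases hu : unconsQ f q with
      | some s =>
          obtain ⟨s1, s2, β⟩ := s
          obtain rfl : s2 = m := unconsQ_snd f q _ hu
          obtain rfl : q = ⟨s1, b', β.cons f⟩ := (unconsQ_eq_some_iff f q β).mp hu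
          rw [Option.elim_some, ih, vtx_apply]
          rw [if_neg (c := (⟨b', b', Quiver.Path.nil⟩ : PathsOf V) = ⟨s1, b', β.cons f⟩)
            (fun h => by
              have hh := (sig_eq_elim h).2.2
              obtain rfl : b' = s1 := (sig_eq_elim h).1
              exact Quiver.Path.nil_ne_cons _ _ (eq_of_heq hh))]
          rw [zero_mul, add_zero]
          rw [if_congr (pcomp_cons_iff f p β r) rfl rfl]
      | none =>
          rw [Option.elim_none, zero_add, vtx_apply, pelt_apply]
          have hq : ∀ (a' : V) (β : Quiver.Path a' m), q ≠ ⟨a', b', β.cons f⟩ := by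
            intro a' β hqe
            rw [(unconsQ_eq_some_iff f q β).mpr hqe] at hu
            exact absurd hu (by simp)
          rw [if_congr (pcomp_cons_none f p q r hq) rfl rfl]
          by_cases h1 : q = (⟨b', b', Quiver.Path.nil⟩ : PathsOf V)
          · subst h1
            by_cases h2 : r = (⟨a, b', p.cons f⟩ : PathsOf V)
            · subst h2; simp
            · rw [if_pos rfl, one_mul,
                if_neg (fun h : (⟨a, b', p.cons f⟩ : PathsOf V) = r => h2 h.symm),
                if_neg (fun h => h2 h.2)]
          · rw [if_neg (fun h : (⟨b', b', Quiver.Path.nil⟩ : PathsOf V) = q => h1 h.symm),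
              zero_mul, if_neg (fun h => h1 h.1)]

lemma pcomp_none_of_ne {r q : PathsOf V} (h : r.2.1 ≠ q.1) : pcomp r q = none :=
  dif_neg h

open Classical in
lemma pathComul_coeff (c : PathCoalg K V) (q r : PathsOf V) :
    coeff2 K q r (pathComul K c) = (pcomp r q).elim 0 c := by
  rw [pathComul, Finsupp.lsum_apply, map_finsuppSum]
  have key : ∀ (s : PathsOf V) (k : K),
      coeff2 K q r (LinearMap.toSpanSingleton K
        (TensorProduct K (PathCoalg K V) (PathCoalg K V)) (deltaPath K s.2.2) k) =
        if pcomp r q = some s then k else 0 := by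
    intro s k
    obtain ⟨s1, s2, sp⟩ := s
    rw [LinearMap.toSpanSingleton_apply, map_smul, smul_eq_mul, deltaPath_coeff]
    by_cases h : pcomp r q = some ⟨s1, s2, sp⟩
    · rw [if_pos h, if_pos h, mul_one]
    · rw [if_neg h, if_neg h, mul_zero]
  simp only [key]
  cases hopt : pcomp r q with
  | none =>
      rw [Option.elim_none, Finsupp.sum]
      apply Finset.sum_eq_zero
      intro s _
      rw [if_neg (by simp)]
  | some s₀ =>
      rw [Option.elim_some]
      simp only [Option.some_inj]
      rw [Finsupp.sum, Finset.sum_ite_eq]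
      split
      · rfl
      · rename_i hmem
        exact (Finsupp.notMem_support_iff.mp hmem).symm

lemma pathComul_pelt {a b : V} (p : Quiver.Path a b) :
    pathComul K (pelt K p) = deltaPath K p := by
  rw [pelt, pathComul, Finsupp.lsum_single, LinearMap.toSpanSingleton_apply_one]

lemma consL_vtx {b c : V} (f : b ⟶ c) :
    consL K f (vtx K b) = pelt K (Quiver.Path.nil.cons f) := by
  rw [vtx, pelt, consL, Finsupp.lsum_single, dif_pos rfl, LinearMap.toSpanSingleton_apply_one]
  simp [Quiver.Path.cast_rfl_rfl]

lemma prim_arrow {x y : V} (f : x ⟶ y) :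
    pathComul K (pelt K (Quiver.Path.nil.cons f)) =
      pelt K (Quiver.Path.nil.cons f) ⊗ₜ[K] vtx K x +
        vtx K y ⊗ₜ[K] pelt K (Quiver.Path.nil.cons f) := by
  rw [pathComul_pelt]
  rw [show deltaPath K (Quiver.Path.nil.cons f) =
    TensorProduct.map (consL K f) LinearMap.id (deltaPath K (Quiver.Path.nil (a := x))) +
      vtx K y ⊗ₜ[K] pelt K (Quiver.Path.nil.cons f) from rfl]
  rw [show deltaPath K (Quiver.Path.nil (a := x)) = vtx K x ⊗ₜ[K] vtx K x from rfl]
  rw [TensorProduct.map_tmul, consL_vtx, LinearMap.id_apply]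

lemma prim_line (x y : V) :
    pathComul K (vtx K x - vtx K y) =
      (vtx K x - vtx K y) ⊗ₜ[K] vtx K x + vtx K y ⊗ₜ[K] (vtx K x - vtx K y) := by
  have hx : pathComul K (vtx K x) = vtx K x ⊗ₜ[K] vtx K x := pathComul_pelt Quiver.Path.nil
  have hy : pathComul K (vtx K y) = vtx K y ⊗ₜ[K] vtx K y := pathComul_pelt Quiver.Path.nil
  rw [map_sub, hx, hy, TensorProduct.sub_tmul, TensorProduct.tmul_sub]
  module

/-- The submodule of `(x,y)`-primitive elements. -/
noncomputable def primMod (x y : V) : Submodule K (PathCoalg K V) where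
  carrier := {c | pathComul K c = c ⊗ₜ[K] vtx K x + vtx K y ⊗ₜ[K] c}
  add_mem' := by
    intro a b ha hb
    simp only [Set.mem_setOf_eq] at ha hb ⊢
    rw [map_add, ha, hb, TensorProduct.add_tmul, TensorProduct.tmul_add]
    module
  zero_mem' := by
    simp only [Set.mem_setOf_eq, map_zero, TensorProduct.zero_tmul,
      TensorProduct.tmul_zero, add_zero]
  smul_mem' := by
    intro k a ha
    simp only [Set.mem_setOf_eq] at ha ⊢
    rw [map_smul, ha, smul_add, TensorProduct.smul_tmul', TensorProduct.tmul_smul]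

lemma mem_primMod {x y : V} {c : PathCoalg K V} :
    c ∈ primMod (K := K) x y ↔
      pathComul K c = c ⊗ₜ[K] vtx K x + vtx K y ⊗ₜ[K] c := Iff.rfl

lemma hlen_ne {a b a' b' : V} (p : Quiver.Path a b) (p' : Quiver.Path a' b')
    (hne : p.length ≠ p'.length) : (⟨a, b, p⟩ : PathsOf V) ≠ ⟨a', b', p'⟩ := by
  intro h
  exact hne (by have := congrArg (fun s : PathsOf V => s.2.2.length) h; simpa using this)

end Aux

/-- for vertices `x, y` of a quiver `Q`, the `(x,y)`-primitive elements of
the path coalgebra `KQ^c` are exactly `y(KQ₁)x ⊕ K(x - y)`, the (direct) sum of the span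
of the arrows from `x` to `y` and the line through `x - y`.  In particular there is a
non-trivial `(x,y)`-primitive element iff there is an arrow from `x` to `y`. -/
theorem stmt9 {K : Type*} [Field K] {V : Type u} [Quiver.{v + 1} V] [DecidableEq V]
    (x y : V) :
    let arrowSpan : Submodule K (PathCoalg K V) :=
      Submodule.span K (Set.range fun f : x ⟶ y => pelt K (Quiver.Path.nil.cons f))
    let line : Submodule K (PathCoalg K V) := Submodule.span K {vtx K x - vtx K y}
    {c : PathCoalg K V | pathComul K c = c ⊗ₜ[K] vtx K x + vtx K y ⊗ₜ[K] c} =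
        ↑(arrowSpan ⊔ line) ∧
      arrowSpan ⊓ line = ⊥ ∧
      ((∃ c : PathCoalg K V,
          pathComul K c = c ⊗ₜ[K] vtx K x + vtx K y ⊗ₜ[K] c ∧ c ∉ line) ↔
        Nonempty (x ⟶ y)) := by
  intro arrowSpan line
  classical
  set S : Set (PathsOf V) := {s | ∃ f : x ⟶ y, s = ⟨x, y, Quiver.Path.nil.cons f⟩} with hS
  have harrow : arrowSpan = Finsupp.supported K K S := by
    rw [Finsupp.supported_eq_span_single]
    show Submodule.span K _ = _
    congr 1
    ext v
    constructor
    · rintro ⟨f, rfl⟩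
      exact ⟨⟨x, y, Quiver.Path.nil.cons f⟩, ⟨f, rfl⟩, rfl⟩
    · rintro ⟨s, ⟨f, rfl⟩, rfl⟩
      exact ⟨f, rfl⟩
  have hco : ∀ c : PathCoalg K V,
      pathComul K c = c ⊗ₜ[K] vtx K x + vtx K y ⊗ₜ[K] c →
      ∀ q r : PathsOf V, (pcomp r q).elim 0 c = c q * vtx K x r + vtx K y q * c r := by
    intro c hc q r
    have h := congrArg (coeff2 K q r) hc
    rw [pathComul_coeff, map_add, coeff2_tmul, coeff2_tmul] at h
    exact h
  -- forward inclusion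
  have main1 : ∀ c : PathCoalg K V,
      pathComul K c = c ⊗ₜ[K] vtx K x + vtx K y ⊗ₜ[K] c → c ∈ arrowSpan ⊔ line := by
    intro c hc
    have hq := hco c hc
    have hlong : ∀ {a m m' b : V} (p : Quiver.Path a m) (f : m ⟶ m') (g : m' ⟶ b),
        c ⟨a, b, (p.cons f).cons g⟩ = 0 := by
      intro a m m' b p f g
      have h := hq ⟨m', b, Quiver.Path.nil.cons g⟩ ⟨a, m', p.cons f⟩
      rw [pcomp_sigma, Option.elim_some, vtx_apply, vtx_apply,
        if_neg (hlen_ne _ _ (by simp)), if_neg (hlen_ne _ _ (by simp)),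
        mul_zero, zero_mul, add_zero] at h
      simpa [Quiver.Path.comp_cons, Quiver.Path.comp_nil] using h
    have harrow1 : ∀ {a b : V} (f : a ⟶ b), a ≠ x →
        c ⟨a, b, Quiver.Path.nil.cons f⟩ = 0 := by
      intro a b f hax
      have h := hq ⟨a, b, Quiver.Path.nil.cons f⟩ ⟨a, a, Quiver.Path.nil⟩
      rw [pcomp_sigma, Option.elim_some, vtx_apply, vtx_apply,
        if_neg (fun he => hax (congrArg Sigma.fst he).symm),
        if_neg (hlen_ne _ _ (by simp)), mul_zero, zero_mul, add_zero] at h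
      simpa [Quiver.Path.comp_cons, Quiver.Path.nil_comp] using h
    have harrow2 : ∀ {a b : V} (f : a ⟶ b), b ≠ y →
        c ⟨a, b, Quiver.Path.nil.cons f⟩ = 0 := by
      intro a b f hby
      have h := hq ⟨b, b, Quiver.Path.nil⟩ ⟨a, b, Quiver.Path.nil.cons f⟩
      rw [pcomp_sigma, Option.elim_some, vtx_apply, vtx_apply,
        if_neg (hlen_ne _ _ (by simp)),
        if_neg (fun he => hby (congrArg Sigma.fst he).symm),
        mul_zero, zero_mul, add_zero] at h
      simpa [Quiver.Path.comp_nil] using h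
    have hnil : ∀ m : V, m ≠ x → m ≠ y → c ⟨m, m, Quiver.Path.nil⟩ = 0 := by
      intro m hmx hmy
      have h := hq ⟨m, m, Quiver.Path.nil⟩ ⟨m, m, Quiver.Path.nil⟩
      rw [pcomp_sigma, Option.elim_some, vtx_apply, vtx_apply,
        if_neg (fun he => hmx (congrArg Sigma.fst he).symm),
        if_neg (fun he => hmy (congrArg Sigma.fst he).symm),
        mul_zero, zero_mul, add_zero] at h
      simpa [Quiver.Path.comp_nil] using h
    have hxyeq : x = y → c ⟨x, x, Quiver.Path.nil⟩ = 0 := by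
      intro hxy
      have h := hq ⟨x, x, Quiver.Path.nil⟩ ⟨x, x, Quiver.Path.nil⟩
      rw [pcomp_sigma, Option.elim_some, vtx_apply, vtx_apply, if_pos rfl,
        if_pos (by rw [hxy]), mul_one, one_mul] at h
      simp only [Quiver.Path.comp_nil] at h
      have h' : c ⟨x, x, Quiver.Path.nil⟩ + 0 =
          c ⟨x, x, Quiver.Path.nil⟩ + c ⟨x, x, Quiver.Path.nil⟩ := by
        rw [add_zero]; exact h
      exact (add_left_cancel h').symm
    have hsum : x ≠ y →
        c ⟨y, y, Quiver.Path.nil⟩ + c ⟨x, x, Quiver.Path.nil⟩ = 0 := by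
      intro hxy
      have h := hq ⟨y, y, Quiver.Path.nil⟩ ⟨x, x, Quiver.Path.nil⟩
      rw [pcomp_none_of_ne hxy, Option.elim_none, vtx_apply, vtx_apply,
        if_pos rfl, if_pos rfl, mul_one, one_mul] at h
      exact h.symm
    set k := c ⟨x, x, Quiver.Path.nil⟩ with hk
    have hd : c - k • (vtx K x - vtx K y) ∈ arrowSpan := by
      rw [harrow, Finsupp.mem_supported]
      intro s hs
      rw [Finset.mem_coe, Finsupp.mem_support_iff] at hs
      by_contra hsS
      apply hs
      rw [Finsupp.sub_apply, Finsupp.smul_apply, Finsupp.sub_apply, smul_eq_mul,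
        vtx_apply, vtx_apply]
      obtain ⟨a, b, p⟩ := s
      cases p with
      | nil =>
          by_cases hax : x = a
          · subst hax
            by_cases hxy : x = y
            · rw [if_pos rfl, if_pos (by rw [hxy]), sub_self, mul_zero, sub_zero]
              exact hxyeq hxy
            · rw [if_pos rfl, if_neg (fun he => hxy (congrArg Sigma.fst he).symm), hk]
              ring
          · by_cases hay : y = a
            · subst hay
              rw [if_neg (fun he => hax (congrArg Sigma.fst he)), if_pos rfl, hk]
              have hs' := hsum hax
              linear_combination hs'
            · rw [if_neg (fun he => hax (congrArg Sigma.fst he)),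
                if_neg (fun he => hay (congrArg Sigma.fst he)), sub_self, mul_zero, sub_zero]
              exact hnil a (fun h => hax h.symm) (fun h => hay h.symm)
      | cons p' f =>
          rw [if_neg (hlen_ne _ _ (by simp)), if_neg (hlen_ne _ _ (by simp)),
            sub_self, mul_zero, sub_zero]
          cases p' with
          | nil =>
              by_cases hax : a = x
              · by_cases hby : b = y
                · exfalso; apply hsS; subst hax; subst hby; exact ⟨f, rfl⟩
                · exact harrow2 f hby
              · exact harrow1 f hax
          | cons p'' g => exact hlong p'' g f
    have hsplit : c = (c - k • (vtx K x - vtx K y)) + k • (vtx K x - vtx K y) := by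
      abel
    rw [hsplit]
    exact Submodule.add_mem_sup hd
      (Submodule.smul_mem _ k (Submodule.mem_span_singleton_self _))
  have hsup_le : arrowSpan ⊔ line ≤ primMod (K := K) x y := by
    apply sup_le
    · apply Submodule.span_le.mpr
      rintro _ ⟨f, rfl⟩
      rw [SetLike.mem_coe, mem_primMod]
      exact prim_arrow f
    · apply Submodule.span_le.mpr
      rintro v hv
      rw [Set.mem_singleton_iff] at hv
      subst hv
      rw [SetLike.mem_coe, mem_primMod]
      exact prim_line x y
  have hsets : {c : PathCoalg K V |
      pathComul K c = c ⊗ₜ[K] vtx K x + vtx K y ⊗ₜ[K] c} = ↑(arrowSpan ⊔ line) := by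
    ext c
    simp only [Set.mem_setOf_eq, SetLike.mem_coe]
    constructor
    · exact main1 c
    · intro hmem
      exact mem_primMod.mp (hsup_le hmem)
  refine ⟨hsets, ?_, ?_⟩
  · rw [eq_bot_iff]
    intro c hc
    obtain ⟨hcA, hcL⟩ := Submodule.mem_inf.mp hc
    rw [Submodule.mem_bot]
    obtain ⟨k', hk'⟩ := Submodule.mem_span_singleton.mp hcL
    by_cases hxy : x = y
    · rw [← hk']; rw [hxy, sub_self, smul_zero]
    · rw [harrow] at hcA
      have hcS := (Finsupp.mem_supported K c).mp hcA
      have hc0 : c ⟨x, x, Quiver.Path.nil⟩ = 0 := by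
        by_contra hne
        obtain ⟨f, hf⟩ := hcS (Finsupp.mem_support_iff.mpr hne)
        exact hlen_ne _ _ (by simp) hf
      rw [← hk', Finsupp.smul_apply, Finsupp.sub_apply, vtx_apply, vtx_apply, if_pos rfl,
        if_neg (fun he => hxy (congrArg Sigma.fst he).symm), smul_eq_mul] at hc0
      rw [← hk', show k' = 0 from by simpa using hc0, zero_smul]
  · constructor
    · rintro ⟨c, hcprim, hcl⟩
      by_contra hne
      rw [not_nonempty_iff] at hne
      have hbot : arrowSpan = ⊥ := by
        have hr : (Set.range fun f : x ⟶ y => pelt K (Quiver.Path.nil.cons f)) = ∅ :=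
          Set.range_eq_empty _
        show Submodule.span K _ = ⊥
        rw [hr, Submodule.span_empty]
      apply hcl
      have hmem : c ∈ arrowSpan ⊔ line := by
        rw [← SetLike.mem_coe, ← hsets]; exact hcprim
      rwa [hbot, bot_sup_eq] at hmem
    · rintro ⟨f⟩
      refine ⟨pelt K (Quiver.Path.nil.cons f), prim_arrow f, ?_⟩
      intro hmem
      obtain ⟨k', hk'⟩ := Submodule.mem_span_singleton.mp hmem
      have h1 := congrArg (fun u : PathCoalg K V => u ⟨x, y, Quiver.Path.nil.cons f⟩) hk'
      rw [Finsupp.smul_apply, Finsupp.sub_apply, vtx_apply, vtx_apply,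
        if_neg (hlen_ne _ _ (by simp)), if_neg (hlen_ne _ _ (by simp)),
        pelt_apply, if_pos rfl, smul_eq_mul] at h1
      simpa using h1
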